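/- Let a, b ∈ ℤ with a ≠ 0 and let G(x) = x⁸ + a·x⁶ + b·x⁴ + a·x² + 1. If both b+2−2a and b+2+2a are squarefree integers and there exists a prime q ≥ 3 such that q² divides a²−4b+8, then G(x) is not monogenic. -/

import Mathlib

open Polynomial

/-- A monic polynomial `f ∈ ℤ[x]` is *monogenic* if it is irreducible over `ℚ` and,
for any number field `K` generated over `ℚ` by a root `θ` of `f`, the ring `ℤ[θ]`
is the full ring of integers (the integral closure of `ℤ`) of `K`. -/
def IsMonogenic (f : Polynomial ℤ) : Prop :=
  f.Monic ∧ Irreducible (f.map (Int.castRingHom ℚ)) ∧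
    ∀ (K : Type) [Field K] [NumberField K] (θ : K),
      Polynomial.aeval θ f = 0 →
      Algebra.adjoin ℚ {θ} = (⊤ : Subalgebra ℚ K) →
      Algebra.adjoin ℤ {θ} = integralClosure ℤ K

theorem stmt_2 (a b : ℤ) (ha : a ≠ 0)
    (h1 : Squarefree (b + 2 - 2 * a)) (h2 : Squarefree (b + 2 + 2 * a))
    (hq : ∃ q : ℕ, q.Prime ∧ 3 ≤ q ∧ (q : ℤ) ^ 2 ∣ (a ^ 2 - 4 * b + 8)) :
    ¬ IsMonogenic (X ^ 8 + C a * X ^ 6 + C b * X ^ 4 + C a * X ^ 2 + 1) := by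
  obtain ⟨q, hqp, hq3, m, hm⟩ := hq
  rintro ⟨hmonic, hirr, hint⟩
  set G : ℤ[X] := X ^ 8 + C a * X ^ 6 + C b * X ^ 4 + C a * X ^ 2 + 1 with hGdef
  set μ : ℚ[X] := G.map (Int.castRingHom ℚ) with hμdef
  haveI : Fact (Irreducible μ) := ⟨hirr⟩
  have hμ0 : μ ≠ 0 := hirr.ne_zero
  let K : Type := AdjoinRoot μ
  haveI : FiniteDimensional ℚ K := PowerBasis.finite (AdjoinRoot.powerBasis hμ0)
  haveI : CharZero K := charZero_of_injective_algebraMap (algebraMap ℚ K).injective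
  haveI : NumberField K := ⟨⟩
  set θ : K := AdjoinRoot.root μ with hθdef
  have hμmonic : μ.Monic := hmonic.map _
  have hmin : minpoly ℚ θ = μ := by
    have := AdjoinRoot.minpoly_root (K := ℚ) hμ0
    rw [hμmonic.leadingCoeff, inv_one, map_one, mul_one] at this
    exact this
  have hmapeq : ∀ R : ℤ[X], R.map (Int.castRingHom ℚ) = R.map (algebraMap ℤ ℚ) := by
    intro R; rw [algebraMap_int_eq]
  have haev : aeval θ G = 0 := by
    have h0 := minpoly.aeval ℚ θ
    rw [hmin] at h0
    rw [← aeval_map_algebraMap ℚ θ G, ← hmapeq]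
    exact h0
  have htop : Algebra.adjoin ℚ {θ} = (⊤ : Subalgebra ℚ K) := AdjoinRoot.adjoinRoot_eq_top
  have hic : Algebra.adjoin ℤ {θ} = integralClosure ℤ K := hint K θ haev htop
  -- the power relation for θ
  have hθ8 : θ ^ 8 + (a : K) * θ ^ 6 + (b : K) * θ ^ 4 + (a : K) * θ ^ 2 + 1 = 0 := by
    have := haev
    simp only [hGdef, map_add, map_mul, map_one, map_pow, map_intCast, aeval_X, aeval_C,
      algebraMap_int_eq, eq_intCast] at this
    exact this
  -- q is nonzero in K
  have hqK : ((q : ℤ) : K) ≠ 0 := by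
    exact_mod_cast (Nat.cast_ne_zero (R := K)).mpr hqp.pos.ne'
  -- the square root of m
  set γ : K := (-2 * θ ^ 6 - 2 * (a : K) * θ ^ 4 + (2 - 2 * (b : K)) * θ ^ 2 - (a : K))
      / ((q : ℤ) : K) with hγdef
  have hw : (-2 * θ ^ 6 - 2 * (a : K) * θ ^ 4 + (2 - 2 * (b : K)) * θ ^ 2 - (a : K)) ^ 2
      = ((a : K) ^ 2 - 4 * (b : K) + 8) := by
    linear_combination (4 * θ ^ 4 + 4 * (a : K) * θ ^ 2 + 4 * (b : K) - 8) * hθ8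
  have hmK : ((a : K) ^ 2 - 4 * (b : K) + 8) = ((q : ℤ) : K) ^ 2 * (m : K) := by
    have h := congrArg (Int.castRingHom K) hm
    simp only [map_add, map_sub, map_mul, map_pow, map_ofNat, eq_intCast] at h
    linear_combination h
  have hγ2 : γ ^ 2 = (m : K) := by
    rw [hγdef, div_pow, hw, hmK]
    exact mul_div_cancel_left₀ _ (pow_ne_zero 2 hqK)
  have hγint : γ ∈ integralClosure ℤ K := by
    refine ⟨X ^ 2 - C m, monic_X_pow_sub_C m (by norm_num), ?_⟩
    rw [← aeval_def, map_sub, map_pow, aeval_X, aeval_C, hγ2, eq_intCast,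
      sub_self]
  rw [← hic, Algebra.adjoin_singleton_eq_range_aeval] at hγint
  obtain ⟨p, hp0⟩ := hγint
  have hp : aeval θ p = γ := hp0
  -- the polynomial relation
  set P : ℤ[X] := C (-2) * X ^ 6 + C (-2 * a) * X ^ 4 + C (2 - 2 * b) * X ^ 2 + C (-a)
    with hPdef
  have haevP : aeval θ P
      = -2 * θ ^ 6 - 2 * (a : K) * θ ^ 4 + (2 - 2 * (b : K)) * θ ^ 2 - (a : K) := by
    simp only [hPdef, map_add, map_mul, map_pow, map_intCast, map_neg, map_sub, map_ofNat,
      aeval_X, aeval_C, algebraMap_int_eq, eq_intCast]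
    push_cast
    ring
  have hroot : aeval θ (C (q : ℤ) * p - P) = 0 := by
    have hqγ : ((q : ℤ) : K) * γ
        = -2 * θ ^ 6 - 2 * (a : K) * θ ^ 4 + (2 - 2 * (b : K)) * θ ^ 2 - (a : K) := by
      rw [hγdef, mul_comm, div_mul_cancel₀ _ hqK]
    rw [map_sub, map_mul, aeval_C, eq_intCast, hp, haevP, hqγ, sub_self]
  have hdvdQ : μ ∣ (C (q : ℤ) * p - P).map (Int.castRingHom ℚ) := by
    rw [← hmin, hmapeq]
    exact minpoly.dvd ℚ θ (by rwa [aeval_map_algebraMap])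
  have hdvd : G ∣ C (q : ℤ) * p - P :=
    (map_dvd_map (Int.castRingHom ℚ) Int.cast_injective hmonic).mp hdvdQ
  -- reduce mod q
  haveI : Fact q.Prime := ⟨hqp⟩
  set φ : ℤ →+* ZMod q := Int.castRingHom (ZMod q) with hφdef
  have hdvd2 : G.map φ ∣ P.map φ := by
    have h := Polynomial.map_dvd φ hdvd
    rw [Polynomial.map_sub, Polynomial.map_mul, map_C] at h
    have hq0 : φ (q : ℤ) = 0 := by
      simp [hφdef, ZMod.natCast_self]
    rw [hq0, map_zero, zero_mul, zero_sub] at h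
    exact (dvd_neg).mp h
  have hdegG : (G.map φ).degree = 8 := by
    rw [hmonic.degree_map φ, hGdef]
    compute_degree!
  have hdegP : (P.map φ).degree < 8 := by
    refine lt_of_le_of_lt degree_map_le ?_
    have : P.degree ≤ 6 := by rw [hPdef]; compute_degree
    exact lt_of_le_of_lt this (by norm_num)
  have hP0 : P.map φ = 0 :=
    Polynomial.eq_zero_of_dvd_of_degree_lt hdvd2 (hdegG ▸ hdegP)
  have hPc : P.coeff 6 = -2 := by
    simp only [hPdef, coeff_add, coeff_C_mul, coeff_X_pow, coeff_C]
    norm_num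
  have hc6 : ((-2 : ℤ) : ZMod q) = 0 := by
    have h6 := congrArg (fun r : (ZMod q)[X] => r.coeff 6) hP0
    simp only [coeff_map, coeff_zero] at h6
    rw [hPc] at h6
    simpa using h6
  have hq2 : (q : ℤ) ∣ 2 := by
    have := (ZMod.intCast_zmod_eq_zero_iff_dvd (-2) q).mp hc6
    exact (dvd_neg).mp this
  have : (q : ℤ) ≤ 2 := Int.le_of_dvd (by norm_num) hq2
  omega
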